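/- arXiv:2603.13048 — 4 statements merged into one kernel-verified Lean document; each statement's English description precedes it below -/
import Mathlib

section
/- Under the Setup and Assumptions (A1), (A2), (A3), (A4), for every γ > 0 and λ > 0 and all (β,θ): ⟨ D_θ(β,θ), Γ_θ(β,θ) ⟩ ≤ − γ ( λ/M − 2 L̄_Ψ² L_{∇g} ) Q(β,θ), where D_θ(β,θ) = − ∫ ∇_θ Ψ(x,θ) [ ∇²g(Ψ(x,θ)) + λ I ] (F(x,β) − Ψ(x,θ)) μ(dx) is the θ-gradient of the Lyapunov function and Γ_θ(β,θ) = γ ∫ ∇_θ Ψ(x,θ) (F(x,β) − Ψ(x,θ)) μ(dx) is the θ-component of the expected direction of the method. -/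
open MeasureTheory ProbabilityTheory RealInnerProductSpace

noncomputable section

/-- Euclidean space `ℝ^n`. -/
abbrev E (n : ℕ) : Type := EuclideanSpace ℝ (Fin n)

/-- The transposed Jacobian (gradient matrix) of `φ` at `x`, acting as a linear map. -/
noncomputable def tJac {n m : ℕ} (φ : E n → E m) (x : E n) : E m →L[ℝ] E n :=
  ContinuousLinearMap.adjoint (fderiv ℝ φ x)

/-- `F(x,β) = ∫ f(x,y,β) κ(x)(dy)`, the conditional expectation model. -/
noncomputable def condF {nX nY nb nf : ℕ} (κ : Kernel (E nX) (E nY))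
    (f : E nX → E nY → E nb → E nf) (x : E nX) (β : E nb) : E nf :=
  ∫ y, f x y β ∂(κ x)

/-- The tracking error `Q(β,θ) = (1/2) ∫ ‖F(x,β) − Ψ(x,θ)‖² μ(dx)`. -/
noncomputable def Qerr {nX nb nt nf : ℕ} (μ : Measure (E nX))
    (F : E nX → E nb → E nf) (Ψ : E nX → E nt → E nf) (β : E nb) (θ : E nt) : ℝ :=
  (1 / 2) * ∫ x, ‖F x β - Ψ x θ‖ ^ 2 ∂μ

/-- Jensen's inequality for the square on a probability space. -/
lemma sq_integral_le_integral_sq {α : Type*} [MeasurableSpace α] {ν : Measure α}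
    [IsProbabilityMeasure ν] {h : α → ℝ} (h0 : ∀ a, 0 ≤ h a)
    (hm : AEStronglyMeasurable h ν) (hi : Integrable (fun a => h a ^ 2) ν) :
    (∫ a, h a ∂ν) ^ 2 ≤ ∫ a, h a ^ 2 ∂ν := by
  have hint : Integrable h ν := by
    refine (((integrable_const (1 : ℝ)).add hi).div_const 2).mono' hm
      (.of_forall fun a => ?_)
    simp only [Pi.add_apply]
    rw [Real.norm_of_nonneg (h0 a)]
    nlinarith [sq_nonneg (h a - 1)]
  set c := ∫ a, h a ∂ν with hc
  have key : 0 ≤ ∫ a, (h a - c) ^ 2 ∂ν := integral_nonneg fun a => sq_nonneg _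
  have expand : ∫ a, (h a - c) ^ 2 ∂ν = (∫ a, h a ^ 2 ∂ν) - 2 * c * c + c ^ 2 := by
    have e : (fun a => (h a - c) ^ 2) = fun a => (h a ^ 2 - 2 * c * h a) + c ^ 2 := by
      funext a; ring
    have i2 : Integrable (fun a => 2 * c * h a) ν := hint.const_mul (2 * c)
    have i1 : Integrable (fun a => h a ^ 2 - 2 * c * h a) ν := hi.sub i2
    rw [e, integral_add i1 (integrable_const _), integral_sub hi i2, integral_const_mul,
      integral_const, probReal_univ, one_smul, ← hc]
  nlinarith [key, expand]

set_option maxHeartbeats 1000000 in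
/-- The abstract θ-descent estimate. -/
lemma key_estimate {nX nt nf : ℕ} (μ : Measure (E nX)) [IsProbabilityMeasure μ]
    (A : E nX → (E nf →L[ℝ] E nt)) (H : E nX → (E nf →L[ℝ] E nf)) (v : E nX → E nf)
    (LΨ : E nX → ℝ) (LbΨ Ldg M γ lam : ℝ)
    (hA_m : AEStronglyMeasurable A μ) (hH_m : AEStronglyMeasurable H μ)
    (hv_m : AEStronglyMeasurable v μ)
    (hLΨ_m : AEStronglyMeasurable LΨ μ) (hLΨ0 : ∀ x, 0 ≤ LΨ x)
    (hAb : ∀ x, ‖A x‖ ≤ LΨ x) (hHb : ∀ x, ‖H x‖ ≤ Ldg) (hLdg : 0 ≤ Ldg)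
    (hLΨ2_int : Integrable (fun x => LΨ x ^ 2) μ)
    (hLΨ2_bd : ∫ x, LΨ x ^ 2 ∂μ ≤ LbΨ ^ 2)
    (hv2_int : Integrable (fun x => ‖v x‖ ^ 2) μ)
    (hM : 0 < M) (hγ : 0 < γ) (hlam : 0 < lam)
    (hLoj : (1 / 2) * ∫ x, ‖v x‖ ^ 2 ∂μ ≤ M * ‖∫ x, A x (v x) ∂μ‖ ^ 2) :
    ⟪-∫ x, A x (H x (v x) + lam • v x) ∂μ, γ • ∫ x, A x (v x) ∂μ⟫ ≤
      -(γ * (lam / M - 2 * LbΨ ^ 2 * Ldg)) * ((1 / 2) * ∫ x, ‖v x‖ ^ 2 ∂μ) := by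
  have hAv_m : AEStronglyMeasurable (fun x => A x (v x)) μ :=
    ContinuousLinearMap.aestronglyMeasurable_comp₂
      ((ContinuousLinearMap.apply ℝ (E nt)).flip :
        (E nf →L[ℝ] E nt) →L[ℝ] E nf →L[ℝ] E nt) hA_m hv_m
  have hHv_m : AEStronglyMeasurable (fun x => H x (v x)) μ :=
    ContinuousLinearMap.aestronglyMeasurable_comp₂
      ((ContinuousLinearMap.apply ℝ (E nf)).flip :
        (E nf →L[ℝ] E nf) →L[ℝ] E nf →L[ℝ] E nf) hH_m hv_m
  have hAHv_m : AEStronglyMeasurable (fun x => A x (H x (v x))) μ :=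
    ContinuousLinearMap.aestronglyMeasurable_comp₂
      ((ContinuousLinearMap.apply ℝ (E nt)).flip :
        (E nf →L[ℝ] E nt) →L[ℝ] E nf →L[ℝ] E nt) hA_m hHv_m
  have hprod_int : Integrable (fun x => LΨ x * ‖v x‖) μ := by
    refine ((hLΨ2_int.add hv2_int).div_const 2).mono' (hLΨ_m.mul hv_m.norm)
      (.of_forall fun x => ?_)
    simp only [Pi.add_apply]
    rw [Real.norm_of_nonneg (mul_nonneg (hLΨ0 x) (norm_nonneg _))]
    nlinarith [sq_nonneg (LΨ x - ‖v x‖)]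
  have hbAv : ∀ x, ‖A x (v x)‖ ≤ LΨ x * ‖v x‖ := fun x =>
    ((A x).le_opNorm _).trans (mul_le_mul_of_nonneg_right (hAb x) (norm_nonneg _))
  have hbAHv : ∀ x, ‖A x (H x (v x))‖ ≤ Ldg * (LΨ x * ‖v x‖) := by
    intro x
    have h1 := (A x).le_opNorm (H x (v x))
    have h3 : ‖H x (v x)‖ ≤ Ldg * ‖v x‖ :=
      ((H x).le_opNorm _).trans (mul_le_mul_of_nonneg_right (hHb x) (norm_nonneg _))
    nlinarith [norm_nonneg (A x), norm_nonneg (H x (v x)), hLΨ0 x, (A x).opNorm_nonneg,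
      hAb x, norm_nonneg (v x)]
  have hAv_int : Integrable (fun x => A x (v x)) μ :=
    hprod_int.mono' hAv_m (.of_forall hbAv)
  have hAHv_int : Integrable (fun x => A x (H x (v x))) μ :=
    (hprod_int.const_mul Ldg).mono' hAHv_m (.of_forall hbAHv)
  set I1 := ∫ x, A x (H x (v x)) ∂μ with hI1
  set I2 := ∫ x, A x (v x) ∂μ with hI2
  set S := ∫ x, LΨ x * ‖v x‖ ∂μ with hS
  set B := ∫ x, ‖v x‖ ^ 2 ∂μ with hB
  have hS0 : 0 ≤ S := integral_nonneg fun x => mul_nonneg (hLΨ0 x) (norm_nonneg _)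
  have hB0 : 0 ≤ B := integral_nonneg fun x => sq_nonneg _
  have hsplit : ∫ x, A x (H x (v x) + lam • v x) ∂μ = I1 + lam • I2 := by
    have e : (fun x => A x (H x (v x) + lam • v x)) =
        fun x => A x (H x (v x)) + lam • A x (v x) := by
      funext x; rw [(A x).map_add, (A x).map_smul]
    have i2 : Integrable (fun x => lam • (A x) (v x)) μ := hAv_int.smul lam
    rw [e, integral_add hAHv_int i2, integral_smul]
  have hI2S : ‖I2‖ ≤ S := (norm_integral_le_integral_norm _).trans
    (integral_mono_of_nonneg (.of_forall fun x => norm_nonneg _) hprod_int (.of_forall hbAv))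
  have hI1S : ‖I1‖ ≤ Ldg * S := by
    refine (norm_integral_le_integral_norm _).trans ?_
    have := integral_mono_of_nonneg (μ := μ) (.of_forall fun x => norm_nonneg _)
      (hprod_int.const_mul Ldg) (.of_forall hbAHv)
    rwa [integral_const_mul] at this
  have hCS : S ^ 2 ≤ LbΨ ^ 2 * B := by
    have hpq : Real.HolderConjugate 2 2 := Real.HolderConjugate.two_two
    have hvL2 : MemLp (fun x => ‖v x‖) 2 μ :=
      (memLp_two_iff_integrable_sq hv_m.norm).2 hv2_int
    have hLΨL2 : MemLp LΨ 2 μ := (memLp_two_iff_integrable_sq hLΨ_m).2 hLΨ2_int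
    have h := integral_mul_le_Lp_mul_Lq_of_nonneg hpq (.of_forall hLΨ0)
      (.of_forall fun x => norm_nonneg (v x))
      (by rw [ENNReal.ofReal_ofNat]; exact hLΨL2)
      (by rw [ENNReal.ofReal_ofNat]; exact hvL2)
    have h2 : ∀ t : ℝ, t ^ (2 : ℝ) = t ^ 2 := fun t => by
      rw [show (2 : ℝ) = ((2 : ℕ) : ℝ) by norm_num, Real.rpow_natCast]
    simp_rw [h2] at h
    have hA2 : 0 ≤ ∫ x, LΨ x ^ 2 ∂μ := integral_nonneg fun x => sq_nonneg _
    have e : ∀ t : ℝ, 0 ≤ t → (t ^ ((1 : ℝ) / 2)) ^ 2 = t := fun t ht => by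
      rw [← Real.rpow_natCast (t ^ ((1 : ℝ) / 2)) 2, ← Real.rpow_mul ht]; norm_num
    calc S ^ 2 ≤ ((∫ x, LΨ x ^ 2 ∂μ) ^ ((1 : ℝ) / 2) * B ^ ((1 : ℝ) / 2)) ^ 2 :=
          pow_le_pow_left₀ hS0 h 2
      _ = (∫ x, LΨ x ^ 2 ∂μ) * B := by rw [mul_pow, e _ hA2, e _ hB0]
      _ ≤ LbΨ ^ 2 * B := mul_le_mul_of_nonneg_right hLΨ2_bd hB0
  rw [hsplit]
  have hip : ⟪-(I1 + lam • I2), γ • I2⟫ = -γ * (⟪I1, I2⟫ + lam * ‖I2‖ ^ 2) := by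
    rw [inner_neg_left, real_inner_smul_right, inner_add_left, real_inner_smul_left,
      real_inner_self_eq_norm_sq]
    ring
  rw [hip]
  have habs : |⟪I1, I2⟫| ≤ ‖I1‖ * ‖I2‖ := abs_real_inner_le_norm I1 I2
  have h1 : -(Ldg * (LbΨ ^ 2 * B)) ≤ ⟪I1, I2⟫ := by
    have hmm : ‖I1‖ * ‖I2‖ ≤ (Ldg * S) * S :=
      mul_le_mul hI1S hI2S (norm_nonneg _) (by positivity)
    nlinarith [neg_abs_le ⟪I1, I2⟫, habs, hmm, mul_nonneg hLdg (sub_nonneg.2 hCS)]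
  have h2 : (1 / 2) * B / M ≤ ‖I2‖ ^ 2 := by
    rw [div_le_iff₀ hM]
    linarith [hLoj]
  have hfin : lam / M * ((1 / 2) * B) - 2 * LbΨ ^ 2 * Ldg * ((1 / 2) * B) ≤
      ⟪I1, I2⟫ + lam * ‖I2‖ ^ 2 := by
    have h3 : lam * ((1 / 2) * B / M) ≤ lam * ‖I2‖ ^ 2 :=
      mul_le_mul_of_nonneg_left h2 hlam.le
    have e : lam * ((1 / 2) * B / M) = lam / M * ((1 / 2) * B) := by ring
    nlinarith [h1, h3]
  nlinarith [mul_le_mul_of_nonneg_left hfin hγ.le]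

/-- the θ-descent estimate in the proof of Lemma 4.3 of the paper,
under (A1)–(A4). -/
theorem statement9 {nX nY nb nt nf : ℕ}
    (μ : Measure (E nX)) [IsProbabilityMeasure μ]
    (κ : Kernel (E nX) (E nY)) [IsMarkovKernel κ]
    (f : E nX → E nY → E nb → E nf)
    (hfm : Measurable (fun q : (E nX × E nY) × E nb => f q.1.1 q.1.2 q.2))
    (hfd : ∀ x y, Differentiable ℝ (f x y))
    (hDfm : ∀ β : E nb,
      AEStronglyMeasurable (fun z : E nX × E nY => tJac (f z.1 z.2) β) (μ ⊗ₘ κ))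
    (Ψ : E nX → E nt → E nf)
    (hΨm : Measurable (fun q : E nX × E nt => Ψ q.1 q.2))
    (hΨd : ∀ x, Differentiable ℝ (Ψ x))
    (hDΨm : ∀ θ : E nt, AEStronglyMeasurable (fun x => tJac (Ψ x) θ) μ)
    -- Assumption (A1)
    (g : E nf → ℝ) (Lg Ldg : ℝ) (hLg : 0 < Lg) (hLdg : 0 < Ldg)
    (hgconv : ConvexOn ℝ Set.univ g) (hg2 : ContDiff ℝ 2 g)
    (hgB : ∀ u : E nf, ‖gradient g u‖ ≤ Lg)
    (hgH : ∀ u : E nf, ‖fderiv ℝ (gradient g) u‖ ≤ Ldg)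
    -- Assumption (A2)
    (Lf Ldf : E nX × E nY → ℝ) (Lbf Lbdf Cf : ℝ)
    (hLfm : Measurable Lf) (hLdfm : Measurable Ldf)
    (hLf0 : ∀ z, 0 ≤ Lf z) (hLdf0 : ∀ z, 0 ≤ Ldf z)
    (hLbf : 0 < Lbf) (hLbdf : 0 < Lbdf) (hCf : 0 < Cf)
    (hfB : ∀ x y (β : E nb), ‖tJac (f x y) β‖ ≤ Lf (x, y))
    (hfLip : ∀ x y (β β' : E nb),
      ‖tJac (f x y) β - tJac (f x y) β'‖ ≤ Ldf (x, y) * ‖β - β'‖)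
    (hMomf : ∀ p ∈ ({2, 4} : Set ℕ),
      (Integrable (fun z => Lf z ^ p) (μ ⊗ₘ κ) ∧ ∫ z, Lf z ^ p ∂(μ ⊗ₘ κ) ≤ Lbf ^ p) ∧
      (∀ β : E nb, Integrable (fun z : E nX × E nY => ‖f z.1 z.2 β‖ ^ p) (μ ⊗ₘ κ) ∧
          ∫ z : E nX × E nY, ‖f z.1 z.2 β‖ ^ p ∂(μ ⊗ₘ κ) ≤ Cf ^ p) ∧
      (Integrable (fun z => Ldf z ^ p) (μ ⊗ₘ κ) ∧ ∫ z, Ldf z ^ p ∂(μ ⊗ₘ κ) ≤ Lbdf ^ p))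
    -- Assumption (A3)
    (LΨ LdΨ : E nX → ℝ) (LbΨ LbdΨ CΨ : ℝ)
    (hLΨm : Measurable LΨ) (hLdΨm : Measurable LdΨ)
    (hLΨ0 : ∀ x, 0 ≤ LΨ x) (hLdΨ0 : ∀ x, 0 ≤ LdΨ x)
    (hLbΨ : 0 < LbΨ) (hLbdΨ : 0 < LbdΨ) (hCΨ : 0 < CΨ)
    (hΨB : ∀ x (θ : E nt), ‖tJac (Ψ x) θ‖ ≤ LΨ x)
    (hΨLip : ∀ x (θ θ' : E nt),
      ‖tJac (Ψ x) θ - tJac (Ψ x) θ'‖ ≤ LdΨ x * ‖θ - θ'‖)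
    (hMomΨ : ∀ p ∈ ({2, 4} : Set ℕ),
      (Integrable (fun x => LΨ x ^ p) μ ∧ ∫ x, LΨ x ^ p ∂μ ≤ LbΨ ^ p) ∧
      (∀ θ : E nt, Integrable (fun x => ‖Ψ x θ‖ ^ p) μ ∧ ∫ x, ‖Ψ x θ‖ ^ p ∂μ ≤ CΨ ^ p) ∧
      (Integrable (fun x => LdΨ x ^ p) μ ∧ ∫ x, LdΨ x ^ p ∂μ ≤ LbdΨ ^ p))
    -- Assumption (A4): stochastic Łojasiewicz condition
    (M : ℝ) (hM : 0 < M)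
    (hLoj : ∀ (β : E nb) (θ : E nt),
      Qerr μ (condF κ f) Ψ β θ ≤
        M * ‖∫ x, tJac (Ψ x) θ (condF κ f x β - Ψ x θ) ∂μ‖ ^ 2)

    (γ lam : ℝ) (hγ : 0 < γ) (hlam : 0 < lam) (β : E nb) (θ : E nt) :
    ⟪-∫ x, tJac (Ψ x) θ (fderiv ℝ (gradient g) (Ψ x θ) (condF κ f x β - Ψ x θ)
          + lam • (condF κ f x β - Ψ x θ)) ∂μ,
      γ • ∫ x, tJac (Ψ x) θ (condF κ f x β - Ψ x θ) ∂μ⟫ ≤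
    -(γ * (lam / M - 2 * LbΨ ^ 2 * Ldg)) * Qerr μ (condF κ f) Ψ β θ := by
  have hΨθ_m : Measurable fun x => Ψ x θ := hΨm.comp (measurable_id.prodMk measurable_const)
  have hfβ_m : Measurable fun z : E nX × E nY => f z.1 z.2 β :=
    hfm.comp (measurable_id.prodMk measurable_const)
  have hF_sm : StronglyMeasurable fun x => condF κ f x β :=
    MeasureTheory.StronglyMeasurable.integral_kernel_prod_right (κ := κ)
      (f := fun x y => f x y β) hfβ_m.stronglyMeasurable
  -- square-integrability of `condF`
  have hf2_int : Integrable (fun z : E nX × E nY => ‖f z.1 z.2 β‖ ^ 2) (μ ⊗ₘ κ) :=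
    ((hMomf 2 (by simp)).2.1 β).1
  have hf2_iff := (Measure.integrable_compProd_iff hf2_int.aestronglyMeasurable).1 hf2_int
  have hII : Integrable (fun x => ∫ y, ‖f x y β‖ ^ 2 ∂κ x) μ := by
    have := hf2_iff.2
    simpa using this
  have hFb : ∀ᵐ x ∂μ, ‖condF κ f x β‖ ^ 2 ≤ ∫ y, ‖f x y β‖ ^ 2 ∂κ x := by
    filter_upwards [hf2_iff.1] with x hx
    have hym : Measurable fun y => f x y β :=
      hfm.comp (((measurable_const.prodMk measurable_id).prodMk measurable_const))
    have hn : ‖condF κ f x β‖ ≤ ∫ y, ‖f x y β‖ ∂κ x := norm_integral_le_integral_norm _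
    have hj : (∫ y, ‖f x y β‖ ∂κ x) ^ 2 ≤ ∫ y, ‖f x y β‖ ^ 2 ∂κ x :=
      sq_integral_le_integral_sq (fun y => norm_nonneg _)
        hym.norm.aestronglyMeasurable hx
    exact (pow_le_pow_left₀ (norm_nonneg _) hn 2).trans hj
  have hF2_int : Integrable (fun x => ‖condF κ f x β‖ ^ 2) μ := by
    have hn_m : AEStronglyMeasurable (fun x => ‖condF κ f x β‖) μ :=
      hF_sm.aestronglyMeasurable.norm
    refine hII.mono' (hn_m.pow 2) (hFb.mono fun x hx => ?_)
    rwa [Real.norm_of_nonneg (sq_nonneg _)]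
  have hFL2 : MemLp (fun x => condF κ f x β) 2 μ :=
    (memLp_two_iff_integrable_sq_norm hF_sm.aestronglyMeasurable).2 hF2_int
  have hΨ2_int : Integrable (fun x => ‖Ψ x θ‖ ^ 2) μ := ((hMomΨ 2 (by simp)).2.1 θ).1
  have hΨL2 : MemLp (fun x => Ψ x θ) 2 μ :=
    (memLp_two_iff_integrable_sq_norm hΨθ_m.aestronglyMeasurable).2 hΨ2_int
  have hvL2 : MemLp (fun x => condF κ f x β - Ψ x θ) 2 μ := hFL2.sub hΨL2
  have hv_m : AEStronglyMeasurable (fun x => condF κ f x β - Ψ x θ) μ := hvL2.1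
  have hv2_int : Integrable (fun x => ‖condF κ f x β - Ψ x θ‖ ^ 2) μ :=
    (memLp_two_iff_integrable_sq_norm hv_m).1 hvL2
  have hgrad1 : ContDiff ℝ 1 (gradient g) := by
    have h1 : ContDiff ℝ 1 (fderiv ℝ g) := hg2.fderiv_right (by norm_num)
    exact ((InnerProductSpace.toDual ℝ (E nf)).symm.contDiff).comp h1
  have hH_m : AEStronglyMeasurable (fun x => fderiv ℝ (gradient g) (Ψ x θ)) μ :=
    (hgrad1.continuous_fderiv (by norm_num)).comp_aestronglyMeasurable
      hΨθ_m.aestronglyMeasurable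
  have key := key_estimate μ (fun x => tJac (Ψ x) θ)
    (fun x => fderiv ℝ (gradient g) (Ψ x θ))
    (fun x => condF κ f x β - Ψ x θ) LΨ LbΨ Ldg M γ lam
    (hDΨm θ) hH_m hv_m hLΨm.aestronglyMeasurable hLΨ0 (fun x => hΨB x θ)
    (fun x => hgH (Ψ x θ)) hLdg.le ((hMomΨ 2 (by simp)).1).1 ((hMomΨ 2 (by simp)).1).2
    hv2_int hM hγ hlam (hLoj β θ)
  exact key
end
end

section
/- Under the Setup and Assumptions (A1), (A2), (A3), (A4), let λ satisfy λ ≥ L_{∇g} and λ > 2 M L̄_Ψ² L_{∇g}, let γ > 0, and set C = γ(λ/M − 2 L̄_Ψ² L_{∇g}) − 4 λ L̄_f² L_{∇g}. If 2C > λ² L̄_f², then for every ε with λ² L̄_f²/C < ε < 2, setting c₁ = C − λ² L̄_f²/ε > 0 and c₂ = 1 − ε/2 > 0, one has for all (β,θ): ⟨ D_β(β,θ), Γ_β(β,θ) ⟩ + ⟨ D_θ(β,θ), Γ_θ(β,θ) ⟩ ≤ − c₁ Q(β,θ) − c₂ ‖∇G(β)‖². -/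
open MeasureTheory ProbabilityTheory RealInnerProductSpace

noncomputable section

/-- `∇_β F(x,β) = ∫ ∇_β f(x,y,β) κ(x)(dy)`, the transposed Jacobian of the
conditional expectation model. -/
noncomputable def DF {nX nY nb nf : ℕ} (κ : Kernel (E nX) (E nY))
    (f : E nX → E nY → E nb → E nf) (x : E nX) (β : E nb) : E nf →L[ℝ] E nb :=
  ∫ y, tJac (f x y) β ∂(κ x)

/-- `∇G(β) = ∫ ∇_β F(x,β) ∇g(F(x,β)) μ(dx)`. -/
noncomputable def gradG {nX nY nb nf : ℕ} (μ : Measure (E nX)) (κ : Kernel (E nX) (E nY))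
    (f : E nX → E nY → E nb → E nf) (g : E nf → ℝ) (β : E nb) : E nb :=
  ∫ x, DF κ f x β (gradient g (condF κ f x β)) ∂μ

/-- The β-gradient `D_β(β,θ)` of the Lyapunov function `W`. -/
noncomputable def Dbeta {nX nY nb nt nf : ℕ} (μ : Measure (E nX)) (κ : Kernel (E nX) (E nY))
    (f : E nX → E nY → E nb → E nf) (Ψ : E nX → E nt → E nf) (g : E nf → ℝ) (lam : ℝ)
    (β : E nb) (θ : E nt) : E nb :=
  gradG μ κ f g β
  + (∫ x, DF κ f x β (gradient g (condF κ f x β) - gradient g (Ψ x θ)) ∂μ)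
  + lam • ∫ x, DF κ f x β (condF κ f x β - Ψ x θ) ∂μ

/-- The β-component `Γ_β(β,θ)` of the expected direction of the method. -/
noncomputable def Gammabeta {nX nY nb nt nf : ℕ} (μ : Measure (E nX)) (κ : Kernel (E nX) (E nY))
    (f : E nX → E nY → E nb → E nf) (Ψ : E nX → E nt → E nf) (g : E nf → ℝ)
    (β : E nb) (θ : E nt) : E nb :=
  -∫ x, DF κ f x β (gradient g (Ψ x θ)) ∂μ

/-- The θ-gradient `D_θ(β,θ)` of the Lyapunov function `W`, with the Hessian and the
regularization combined as `∇²g(Ψ) + λ I`. -/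
noncomputable def Dtheta {nX nY nb nt nf : ℕ} (μ : Measure (E nX)) (κ : Kernel (E nX) (E nY))
    (f : E nX → E nY → E nb → E nf) (Ψ : E nX → E nt → E nf) (g : E nf → ℝ) (lam : ℝ)
    (β : E nb) (θ : E nt) : E nt :=
  -∫ x, tJac (Ψ x) θ (fderiv ℝ (gradient g) (Ψ x θ) (condF κ f x β - Ψ x θ)
      + lam • (condF κ f x β - Ψ x θ)) ∂μ

/-- The θ-component `Γ_θ(β,θ)` of the expected direction of the method. -/
noncomputable def Gammatheta {nX nY nb nt nf : ℕ} (μ : Measure (E nX)) (κ : Kernel (E nX) (E nY))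
    (f : E nX → E nY → E nb → E nf) (Ψ : E nX → E nt → E nf) (γ : ℝ)
    (β : E nb) (θ : E nt) : E nt :=
  γ • ∫ x, tJac (Ψ x) θ (condF κ f x β - Ψ x θ) ∂μ


section Helpers

open Filter

variable {α β : Type*} {mα : MeasurableSpace α} {mβ : MeasurableSpace β}
  {μ : Measure α} [SFinite μ] {κ : Kernel α β} [IsSFiniteKernel κ]
  {F : Type*} [NormedAddCommGroup F] [NormedSpace ℝ F]

omit [NormedSpace ℝ F] in
lemma st11_asm_slice {h : α × β → F} (hf : AEStronglyMeasurable h (μ ⊗ₘ κ)) :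
    ∀ᵐ x ∂μ, AEStronglyMeasurable (fun y => h (x, y)) (κ x) := by
  rw [Measure.compProd] at hf
  simpa using hf.compProd_mk_left

lemma st11_asm_integral_kernel {h : α × β → F} (hf : AEStronglyMeasurable h (μ ⊗ₘ κ)) :
    AEStronglyMeasurable (fun x => ∫ y, h (x, y) ∂κ x) μ := by
  rw [Measure.compProd] at hf
  simpa using hf.integral_kernel_compProd

lemma st11_int_integral_kernel {h : α × β → F} (hf : Integrable h (μ ⊗ₘ κ)) :
    Integrable (fun x => ∫ y, h (x, y) ∂κ x) μ := by
  rw [Measure.compProd] at hf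
  simpa using hf.integral_compProd

omit [NormedSpace ℝ F] in
lemma st11_int_slice {h : α × β → F} (hf : Integrable h (μ ⊗ₘ κ)) :
    ∀ᵐ x ∂μ, Integrable (fun y => h (x, y)) (κ x) :=
  ((Measure.integrable_compProd_iff hf.aestronglyMeasurable).mp hf).1

omit [SFinite μ] in
/-- Cauchy–Schwarz for integrals of nonnegative functions. -/
lemma st11_cs2 {f g : α → ℝ} (hf0 : ∀ x, 0 ≤ f x) (hg0 : ∀ x, 0 ≤ g x)
    (hf : MeasureTheory.MemLp f 2 μ) (hg : MeasureTheory.MemLp g 2 μ) :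
    ∫ x, f x * g x ∂μ ≤ Real.sqrt (∫ x, f x ^ 2 ∂μ) * Real.sqrt (∫ x, g x ^ 2 ∂μ) := by
  have hpq : Real.HolderConjugate 2 2 := Real.HolderConjugate.two_two
  have h2 : (ENNReal.ofReal (2:ℝ)) = 2 := by norm_num
  have H := MeasureTheory.integral_mul_le_Lp_mul_Lq_of_nonneg hpq
    (Filter.Eventually.of_forall hf0) (Filter.Eventually.of_forall hg0)
    (h2 ▸ hf) (h2 ▸ hg)
  have hrw : ∀ (F : α → ℝ), (∫ x, F x ^ (2:ℝ) ∂μ) = ∫ x, F x ^ (2:ℕ) ∂μ := by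
    intro F
    refine integral_congr_ae (Filter.Eventually.of_forall fun x => ?_)
    rw [show ((2:ℝ)) = ((2:ℕ):ℝ) by norm_num]
    exact Real.rpow_natCast (F x) 2
  rw [hrw f, hrw g] at H
  simpa [Real.sqrt_eq_rpow] using H

omit [SFinite μ] in
/-- Jensen: the square of the mean is bounded by the mean square. -/
lemma st11_sq_int_le {ρ : Measure β} [IsProbabilityMeasure ρ] {f : β → ℝ}
    (hm : AEStronglyMeasurable f ρ) (h0 : ∀ y, 0 ≤ f y)
    (h2i : Integrable (fun y => f y ^ 2) ρ) :
    (∫ y, f y ∂ρ) ^ 2 ≤ ∫ y, f y ^ 2 ∂ρ := by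
  have memf : MemLp f 2 ρ := (memLp_two_iff_integrable_sq hm).2 h2i
  have mem1 : MemLp (fun _ : β => (1:ℝ)) 2 ρ := memLp_const 1
  have h := st11_cs2 h0 (fun _ => zero_le_one) memf mem1
  simp only [mul_one, one_pow, integral_const, measure_univ, ENNReal.toReal_one, probReal_univ, smul_eq_mul,
    Real.sqrt_one] at h
  have h0' : 0 ≤ ∫ y, f y ∂ρ := integral_nonneg h0
  calc (∫ y, f y ∂ρ) ^ 2 ≤ (Real.sqrt (∫ y, f y ^ 2 ∂ρ)) ^ 2 :=
        pow_le_pow_left₀ h0' h 2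
    _ = ∫ y, f y ^ 2 ∂ρ := Real.sq_sqrt (integral_nonneg fun y => sq_nonneg _)

omit [SFinite μ] in
lemma st11_int_mul₂ {f g : α → ℝ} (hf : MemLp f 2 μ) (hg : MemLp g 2 μ) :
    Integrable (fun x => f x * g x) μ := by
  have h : MemLp (g • f) 1 μ := hf.smul hg
  have := memLp_one_iff_integrable.mp h
  simpa [Pi.smul_apply, smul_eq_mul, mul_comm, Pi.mul_def] using this

omit [SFinite μ] in
lemma st11_asm_clm_apply {G H : Type*} [NormedAddCommGroup G] [NormedSpace ℝ G]
    [NormedAddCommGroup H] [NormedSpace ℝ H]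
    {T : α → (G →L[ℝ] H)} {w : α → G}
    (hT : AEStronglyMeasurable T μ) (hw : AEStronglyMeasurable w μ) :
    AEStronglyMeasurable (fun x => T x (w x)) μ :=
  isBoundedBilinearMap_apply.continuous.comp_aestronglyMeasurable (hT.prodMk hw)

end Helpers

section GradHelpers

variable {H : Type*} [NormedAddCommGroup H] [InnerProductSpace ℝ H] [CompleteSpace H]
  {g : H → ℝ}

lemma st11_grad_contDiff (hg2 : ContDiff ℝ 2 g) : ContDiff ℝ 1 (gradient g) := by
  have h1 : ContDiff ℝ 1 (fderiv ℝ g) := hg2.fderiv_right (by norm_num)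
  exact (InnerProductSpace.toDual ℝ H).symm.contDiff.comp h1

lemma st11_grad_cont (hg2 : ContDiff ℝ 2 g) : Continuous (gradient g) :=
  (st11_grad_contDiff hg2).continuous

lemma st11_gradH_cont (hg2 : ContDiff ℝ 2 g) : Continuous (fderiv ℝ (gradient g)) :=
  (st11_grad_contDiff hg2).continuous_fderiv one_ne_zero

lemma st11_grad_lip (hg2 : ContDiff ℝ 2 g) {Ldg : ℝ}
    (hgH : ∀ u, ‖fderiv ℝ (gradient g) u‖ ≤ Ldg) (a b : H) :
    ‖gradient g a - gradient g b‖ ≤ Ldg * ‖a - b‖ := by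
  have hdiff : ∀ x ∈ (Set.univ : Set H), DifferentiableAt ℝ (gradient g) x :=
    fun x _ => ((st11_grad_contDiff hg2).differentiable one_ne_zero).differentiableAt
  exact convex_univ.norm_image_sub_le_of_norm_fderiv_le hdiff
    (fun x _ => hgH x) (Set.mem_univ b) (Set.mem_univ a)

end GradHelpers

set_option maxHeartbeats 1600000 in
/-- Lemma 4.3 of the paper, the descent property `⟨∇W, Γ⟩ ≤ −V`
with `V = c₁ Q + c₂ ‖∇G‖²`, in explicit form, under (A1)–(A4). -/
theorem statement11 {nX nY nb nt nf : ℕ}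
    (μ : Measure (E nX)) [IsProbabilityMeasure μ]
    (κ : Kernel (E nX) (E nY)) [IsMarkovKernel κ]
    (f : E nX → E nY → E nb → E nf)
    (hfm : Measurable (fun q : (E nX × E nY) × E nb => f q.1.1 q.1.2 q.2))
    (hfd : ∀ x y, Differentiable ℝ (f x y))
    (hDfm : ∀ β : E nb,
      AEStronglyMeasurable (fun z : E nX × E nY => tJac (f z.1 z.2) β) (μ ⊗ₘ κ))
    (Ψ : E nX → E nt → E nf)
    (hΨm : Measurable (fun q : E nX × E nt => Ψ q.1 q.2))
    (hΨd : ∀ x, Differentiable ℝ (Ψ x))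
    (hDΨm : ∀ θ : E nt, AEStronglyMeasurable (fun x => tJac (Ψ x) θ) μ)
    -- Assumption (A1)
    (g : E nf → ℝ) (Lg Ldg : ℝ) (hLg : 0 < Lg) (hLdg : 0 < Ldg)
    (hgconv : ConvexOn ℝ Set.univ g) (hg2 : ContDiff ℝ 2 g)
    (hgB : ∀ u : E nf, ‖gradient g u‖ ≤ Lg)
    (hgH : ∀ u : E nf, ‖fderiv ℝ (gradient g) u‖ ≤ Ldg)
    -- Assumption (A2)
    (Lf Ldf : E nX × E nY → ℝ) (Lbf Lbdf Cf : ℝ)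
    (hLfm : Measurable Lf) (hLdfm : Measurable Ldf)
    (hLf0 : ∀ z, 0 ≤ Lf z) (hLdf0 : ∀ z, 0 ≤ Ldf z)
    (hLbf : 0 < Lbf) (hLbdf : 0 < Lbdf) (hCf : 0 < Cf)
    (hfB : ∀ x y (β : E nb), ‖tJac (f x y) β‖ ≤ Lf (x, y))
    (hfLip : ∀ x y (β β' : E nb),
      ‖tJac (f x y) β - tJac (f x y) β'‖ ≤ Ldf (x, y) * ‖β - β'‖)
    (hMomf : ∀ p ∈ ({2, 4} : Set ℕ),
      (Integrable (fun z => Lf z ^ p) (μ ⊗ₘ κ) ∧ ∫ z, Lf z ^ p ∂(μ ⊗ₘ κ) ≤ Lbf ^ p) ∧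
      (∀ β : E nb, Integrable (fun z : E nX × E nY => ‖f z.1 z.2 β‖ ^ p) (μ ⊗ₘ κ) ∧
          ∫ z : E nX × E nY, ‖f z.1 z.2 β‖ ^ p ∂(μ ⊗ₘ κ) ≤ Cf ^ p) ∧
      (Integrable (fun z => Ldf z ^ p) (μ ⊗ₘ κ) ∧ ∫ z, Ldf z ^ p ∂(μ ⊗ₘ κ) ≤ Lbdf ^ p))
    -- Assumption (A3)
    (LΨ LdΨ : E nX → ℝ) (LbΨ LbdΨ CΨ : ℝ)
    (hLΨm : Measurable LΨ) (hLdΨm : Measurable LdΨ)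
    (hLΨ0 : ∀ x, 0 ≤ LΨ x) (hLdΨ0 : ∀ x, 0 ≤ LdΨ x)
    (hLbΨ : 0 < LbΨ) (hLbdΨ : 0 < LbdΨ) (hCΨ : 0 < CΨ)
    (hΨB : ∀ x (θ : E nt), ‖tJac (Ψ x) θ‖ ≤ LΨ x)
    (hΨLip : ∀ x (θ θ' : E nt),
      ‖tJac (Ψ x) θ - tJac (Ψ x) θ'‖ ≤ LdΨ x * ‖θ - θ'‖)
    (hMomΨ : ∀ p ∈ ({2, 4} : Set ℕ),
      (Integrable (fun x => LΨ x ^ p) μ ∧ ∫ x, LΨ x ^ p ∂μ ≤ LbΨ ^ p) ∧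
      (∀ θ : E nt, Integrable (fun x => ‖Ψ x θ‖ ^ p) μ ∧ ∫ x, ‖Ψ x θ‖ ^ p ∂μ ≤ CΨ ^ p) ∧
      (Integrable (fun x => LdΨ x ^ p) μ ∧ ∫ x, LdΨ x ^ p ∂μ ≤ LbdΨ ^ p))
    -- Assumption (A4): stochastic Łojasiewicz condition
    (M : ℝ) (hM : 0 < M)
    (hLoj : ∀ (β : E nb) (θ : E nt),
      Qerr μ (condF κ f) Ψ β θ ≤
        M * ‖∫ x, tJac (Ψ x) θ (condF κ f x β - Ψ x θ) ∂μ‖ ^ 2)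

    (lam γ : ℝ) (hlam1 : Ldg ≤ lam) (hlam2 : 2 * M * LbΨ ^ 2 * Ldg < lam) (hγ : 0 < γ)
    (C : ℝ) (hC : C = γ * (lam / M - 2 * LbΨ ^ 2 * Ldg) - 4 * lam * Lbf ^ 2 * Ldg)
    (h2C : lam ^ 2 * Lbf ^ 2 < 2 * C)
    (ε : ℝ) (hε1 : lam ^ 2 * Lbf ^ 2 / C < ε) (hε2 : ε < 2)
    (c₁ c₂ : ℝ) (hc₁ : c₁ = C - lam ^ 2 * Lbf ^ 2 / ε) (hc₂ : c₂ = 1 - ε / 2) :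
    0 < c₁ ∧ 0 < c₂ ∧
    ∀ (β : E nb) (θ : E nt),
      ⟪Dbeta μ κ f Ψ g lam β θ, Gammabeta μ κ f Ψ g β θ⟫
      + ⟪Dtheta μ κ f Ψ g lam β θ, Gammatheta μ κ f Ψ γ β θ⟫ ≤
      -(c₁ * Qerr μ (condF κ f) Ψ β θ) - c₂ * ‖gradG μ κ f g β‖ ^ 2 := by
  -- positivity of the constants
  have hlam0 : 0 < lam := lt_trans (by positivity) hlam2
  have hC0 : 0 < C := by nlinarith [sq_nonneg (lam * Lbf)]
  have hε0 : 0 < ε := lt_of_le_of_lt (div_nonneg (by positivity) hC0.le) hε1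
  have hc₁0 : 0 < c₁ := by
    rw [hc₁, sub_pos, div_lt_iff₀ hε0]
    have h := (div_lt_iff₀ hC0).mp hε1
    nlinarith
  have hc₂0 : 0 < c₂ := by rw [hc₂]; linarith
  refine ⟨hc₁0, hc₂0, fun β θ => ?_⟩
  -- abbreviations
  set A : E nX → (E nf →L[ℝ] E nb) := fun x => DF κ f x β with hA_def
  set B : E nX → (E nf →L[ℝ] E nt) := fun x => tJac (Ψ x) θ with hB_def
  set u : E nX → E nf := fun x => condF κ f x β with hu_def
  set v : E nX → E nf := fun x => Ψ x θ with hv_def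
  set q : E nX → ℝ := fun x => ‖u x - v x‖ with hq_def
  set ℓ : E nX → ℝ := fun x => ∫ y, Lf (x, y) ∂κ x with hl_def
  -- basic measurability
  have hf_meas_β : Measurable (fun z : E nX × E nY => f z.1 z.2 β) :=
    hfm.comp (measurable_id.prodMk measurable_const)
  have hv_asm : AEStronglyMeasurable v μ :=
    (hΨm.comp (measurable_id.prodMk measurable_const)).aestronglyMeasurable
  have hu_asm : AEStronglyMeasurable u μ :=
    st11_asm_integral_kernel hf_meas_β.aestronglyMeasurable
  have he_asm : AEStronglyMeasurable (fun x => u x - v x) μ := hu_asm.sub hv_asm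
  have hq_asm : AEStronglyMeasurable q μ := he_asm.norm
  have hA_asm : AEStronglyMeasurable A μ := st11_asm_integral_kernel (hDfm β)
  have hB_asm : AEStronglyMeasurable B μ := hDΨm θ
  -- moment extraction (p = 2)
  obtain ⟨⟨hLf2_int, hLf2_le⟩, hf2m, -⟩ := hMomf 2 (by norm_num)
  obtain ⟨hf2_int, hf2_le⟩ := hf2m β
  obtain ⟨⟨hLΨ2_int, hLΨ2_le⟩, hΨ2m, -⟩ := hMomΨ 2 (by norm_num)
  obtain ⟨hΨ2_int, hΨ2_le⟩ := hΨ2m θ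
  -- L² facts for ℓ
  have hLf_mem2 : MemLp Lf 2 (μ ⊗ₘ κ) :=
    (memLp_two_iff_integrable_sq hLfm.aestronglyMeasurable).2 hLf2_int
  have hLf_int : Integrable Lf (μ ⊗ₘ κ) :=
    memLp_one_iff_integrable.mp (hLf_mem2.mono_exponent (by norm_num))
  have hl_int : Integrable ℓ μ := st11_int_integral_kernel hLf_int
  have hl0 : ∀ x, 0 ≤ ℓ x := fun x => integral_nonneg fun y => hLf0 _
  have hmf_int : Integrable (fun x => ∫ y, Lf (x, y) ^ 2 ∂κ x) μ :=
    st11_int_integral_kernel hLf2_int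
  have hjen : ∀ᵐ x ∂μ, ℓ x ^ 2 ≤ ∫ y, Lf (x, y) ^ 2 ∂κ x := by
    filter_upwards [st11_int_slice hLf2_int] with x hx
    exact st11_sq_int_le (hLfm.comp measurable_prodMk_left).aestronglyMeasurable
      (fun y => hLf0 _) hx
  have hlsq_int : Integrable (fun x => ℓ x ^ 2) μ := by
    refine Integrable.mono' hmf_int
      ((continuous_pow 2).comp_aestronglyMeasurable hl_int.aestronglyMeasurable) ?_
    filter_upwards [hjen] with x hx
    rw [Real.norm_of_nonneg (by positivity)]; exact hx
  have hl_mem2 : MemLp ℓ 2 μ :=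
    (memLp_two_iff_integrable_sq hl_int.aestronglyMeasurable).2 hlsq_int
  have hlsq_le : ∫ x, ℓ x ^ 2 ∂μ ≤ Lbf ^ 2 := by
    refine (integral_mono_ae hlsq_int hmf_int hjen).trans ?_
    rw [← Measure.integral_compProd hLf2_int]; exact hLf2_le
  -- L² facts for q
  have hnf2_int : Integrable (fun x => ∫ y, ‖f x y β‖ ^ 2 ∂κ x) μ :=
    st11_int_integral_kernel hf2_int
  have hu_bd : ∀ᵐ x ∂μ, ‖u x‖ ^ 2 ≤ ∫ y, ‖f x y β‖ ^ 2 ∂κ x := by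
    filter_upwards [st11_int_slice hf2_int] with x hx
    have h1 : ‖u x‖ ≤ ∫ y, ‖f x y β‖ ∂κ x := norm_integral_le_integral_norm _
    have h2 : (∫ y, ‖f x y β‖ ∂κ x) ^ 2 ≤ ∫ y, ‖f x y β‖ ^ 2 ∂κ x :=
      st11_sq_int_le ((hf_meas_β.comp measurable_prodMk_left).aestronglyMeasurable).norm
        (fun y => norm_nonneg _) hx
    exact (pow_le_pow_left₀ (norm_nonneg _) h1 2).trans h2
  have hqsq_int : Integrable (fun x => q x ^ 2) μ := by
    refine Integrable.mono' ((hnf2_int.const_mul 2).add (hΨ2_int.const_mul 2))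
      ((continuous_pow 2).comp_aestronglyMeasurable hq_asm) ?_
    filter_upwards [hu_bd] with x hx
    rw [Real.norm_of_nonneg (by positivity)]
    have h0 : (0:ℝ) ≤ q x := norm_nonneg _
    have h : q x ≤ ‖u x‖ + ‖v x‖ := norm_sub_le (u x) (v x)
    have hv2 : ‖v x‖ ^ 2 = ‖Ψ x θ‖ ^ 2 := rfl
    show q x ^ 2 ≤ 2 * (∫ y, ‖f x y β‖ ^ 2 ∂κ x) + 2 * ‖Ψ x θ‖ ^ 2
    nlinarith only [h0, h, hx, hv2, sq_nonneg (‖u x‖ - ‖v x‖), norm_nonneg (u x),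
      norm_nonneg (v x)]
  have hq_mem2 : MemLp q 2 μ := (memLp_two_iff_integrable_sq hq_asm).2 hqsq_int
  have hq0 : ∀ x, 0 ≤ q x := fun x => norm_nonneg _
  set s : ℝ := Real.sqrt (∫ x, q x ^ 2 ∂μ) with hs_def
  have hs0 : 0 ≤ s := Real.sqrt_nonneg _
  have hs2 : s ^ 2 = ∫ x, q x ^ 2 ∂μ :=
    Real.sq_sqrt (integral_nonneg fun x => sq_nonneg _)
  have hQs : Qerr μ (condF κ f) Ψ β θ = s ^ 2 / 2 := by
    rw [Qerr, hs2]
    have : (fun x => ‖condF κ f x β - Ψ x θ‖ ^ 2) = fun x => q x ^ 2 := rfl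
    rw [this]; ring
  -- L² facts for LΨ
  have hLΨ_mem2 : MemLp LΨ 2 μ :=
    (memLp_two_iff_integrable_sq hLΨm.aestronglyMeasurable).2 hLΨ2_int
  -- a.e. bound for the operator norm of A
  have hnA : ∀ᵐ x ∂μ, ‖A x‖ ≤ ℓ x := by
    filter_upwards [st11_int_slice hLf_int] with x hx
    calc ‖A x‖ ≤ ∫ y, ‖tJac (f x y) β‖ ∂κ x := norm_integral_le_integral_norm _
      _ ≤ ∫ y, Lf (x, y) ∂κ x :=
          integral_mono_of_nonneg (Filter.Eventually.of_forall fun y => norm_nonneg _)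
            hx (Filter.Eventually.of_forall fun y => hfB x y β)
  -- measurability of composed integrands
  have hgu_asm : AEStronglyMeasurable (fun x => gradient g (u x)) μ :=
    (st11_grad_cont hg2).comp_aestronglyMeasurable hu_asm
  have hgv_asm : AEStronglyMeasurable (fun x => gradient g (v x)) μ :=
    (st11_grad_cont hg2).comp_aestronglyMeasurable hv_asm
  have hH_asm : AEStronglyMeasurable (fun x => fderiv ℝ (gradient g) (v x)) μ :=
    (st11_gradH_cont hg2).comp_aestronglyMeasurable hv_asm
  -- integrability of the five vector-valued integrands
  have hlq_int : Integrable (fun x => ℓ x * q x) μ := st11_int_mul₂ hl_mem2 hq_mem2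
  have hLΨq_int : Integrable (fun x => LΨ x * q x) μ := st11_int_mul₂ hLΨ_mem2 hq_mem2
  have i1 : Integrable (fun x => A x (gradient g (u x))) μ := by
    refine Integrable.mono' (hl_int.mul_const Lg) (st11_asm_clm_apply hA_asm hgu_asm) ?_
    filter_upwards [hnA] with x hx
    exact (ContinuousLinearMap.le_opNorm _ _).trans
      (mul_le_mul hx (hgB _) (norm_nonneg _) (hl0 x))
  have i2 : Integrable (fun x => A x (gradient g (v x))) μ := by
    refine Integrable.mono' (hl_int.mul_const Lg) (st11_asm_clm_apply hA_asm hgv_asm) ?_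
    filter_upwards [hnA] with x hx
    exact (ContinuousLinearMap.le_opNorm _ _).trans
      (mul_le_mul hx (hgB _) (norm_nonneg _) (hl0 x))
  have i3 : Integrable (fun x => A x (u x - v x)) μ := by
    refine Integrable.mono' hlq_int (st11_asm_clm_apply hA_asm he_asm) ?_
    filter_upwards [hnA] with x hx
    exact (ContinuousLinearMap.le_opNorm _ _).trans
      (mul_le_mul_of_nonneg_right hx (norm_nonneg _))
  have i4 : Integrable (fun x => B x (u x - v x)) μ := by
    refine Integrable.mono' hLΨq_int (st11_asm_clm_apply hB_asm he_asm) ?_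
    refine Filter.Eventually.of_forall fun x => ?_
    exact (ContinuousLinearMap.le_opNorm _ _).trans
      (mul_le_mul_of_nonneg_right (hΨB x θ) (norm_nonneg _))
  have i5 : Integrable (fun x => B x ((fderiv ℝ (gradient g) (v x)) (u x - v x))) μ := by
    refine Integrable.mono' (hLΨq_int.const_mul Ldg)
      (st11_asm_clm_apply hB_asm (st11_asm_clm_apply hH_asm he_asm)) ?_
    refine Filter.Eventually.of_forall fun x => ?_
    calc ‖B x ((fderiv ℝ (gradient g) (v x)) (u x - v x))‖
        ≤ LΨ x * ‖(fderiv ℝ (gradient g) (v x)) (u x - v x)‖ :=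
          (ContinuousLinearMap.le_opNorm _ _).trans
            (mul_le_mul_of_nonneg_right (hΨB x θ) (norm_nonneg _))
      _ ≤ LΨ x * (Ldg * q x) := by
          refine mul_le_mul_of_nonneg_left ?_ (hLΨ0 x)
          exact (ContinuousLinearMap.le_opNorm _ _).trans
            (mul_le_mul_of_nonneg_right (hgH _) (norm_nonneg _))
      _ = Ldg * (LΨ x * q x) := by ring
  -- the five vectors
  set Gv : E nb := gradG μ κ f g β with hGv_def
  set Pv : E nb := ∫ x, A x (gradient g (u x) - gradient g (v x)) ∂μ with hPv_def
  set Rv : E nb := ∫ x, A x (u x - v x) ∂μ with hRv_def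
  set Sv : E nt := ∫ x, B x (u x - v x) ∂μ with hSv_def
  set Tv : E nt := ∫ x, B x ((fderiv ℝ (gradient g) (v x)) (u x - v x)) ∂μ with hTv_def
  have hGv_eq : Gv = ∫ x, A x (gradient g (u x)) ∂μ := rfl
  have i12 : Integrable (fun x => A x (gradient g (u x)) - A x (gradient g (v x))) μ :=
    i1.sub i2
  have hPv_eq : Pv = Gv - ∫ x, A x (gradient g (v x)) ∂μ := by
    rw [hPv_def, hGv_eq]
    rw [show (fun x => A x (gradient g (u x) - gradient g (v x)))
        = fun x => A x (gradient g (u x)) - A x (gradient g (v x)) from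
      funext fun x => map_sub (A x) _ _]
    exact integral_sub i1 i2
  have hI2 : (∫ x, A x (gradient g (v x)) ∂μ) = Gv - Pv := by
    rw [hPv_eq]; abel
  -- identification of the four quantities in the statement
  have hDb : Dbeta μ κ f Ψ g lam β θ = Gv + Pv + lam • Rv := rfl
  have hGb : Gammabeta μ κ f Ψ g β θ = Pv - Gv := by
    show -∫ x, A x (gradient g (v x)) ∂μ = Pv - Gv
    rw [hI2]; abel
  have hDt : Dtheta μ κ f Ψ g lam β θ = -(Tv + lam • Sv) := by
    show -∫ x, B x ((fderiv ℝ (gradient g) (v x)) (u x - v x) + lam • (u x - v x)) ∂μ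
      = -(Tv + lam • Sv)
    rw [show (fun x => B x ((fderiv ℝ (gradient g) (v x)) (u x - v x) + lam • (u x - v x)))
        = fun x => B x ((fderiv ℝ (gradient g) (v x)) (u x - v x)) + lam • B x (u x - v x) from
      funext fun x => by rw [map_add, (B x).map_smul]]
    have i4' : Integrable (fun x => lam • B x (u x - v x)) μ := i4.smul lam
    rw [integral_add i5 i4', integral_smul]
  have hGt : Gammatheta μ κ f Ψ γ β θ = γ • Sv := rfl
  -- expansion of the inner products
  have hexp : ⟪Dbeta μ κ f Ψ g lam β θ, Gammabeta μ κ f Ψ g β θ⟫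
      + ⟪Dtheta μ κ f Ψ g lam β θ, Gammatheta μ κ f Ψ γ β θ⟫
      = ‖Pv‖ ^ 2 - ‖Gv‖ ^ 2 + lam * ⟪Rv, Pv⟫ - lam * ⟪Rv, Gv⟫
        - γ * ⟪Tv, Sv⟫ - γ * (lam * ‖Sv‖ ^ 2) := by
    rw [hDb, hGb, hDt, hGt]
    simp only [inner_add_left, inner_sub_right, inner_neg_left, real_inner_smul_left,
      real_inner_smul_right, inner_add_right]
    simp only [real_inner_self_eq_norm_sq, real_inner_comm Pv Gv]
    ring
  -- norm bounds on the four integrals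
  have hsql : Real.sqrt (∫ x, ℓ x ^ 2 ∂μ) ≤ Lbf :=
    (Real.sqrt_le_sqrt hlsq_le).trans (le_of_eq (Real.sqrt_sq hLbf.le))
  have hsqΨ : Real.sqrt (∫ x, LΨ x ^ 2 ∂μ) ≤ LbΨ :=
    (Real.sqrt_le_sqrt hLΨ2_le).trans (le_of_eq (Real.sqrt_sq hLbΨ.le))
  have hcs_l : ∫ x, ℓ x * q x ∂μ ≤ Lbf * s := by
    refine (st11_cs2 hl0 hq0 hl_mem2 hq_mem2).trans ?_
    exact mul_le_mul_of_nonneg_right hsql (Real.sqrt_nonneg _)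
  have hcs_Ψ : ∫ x, LΨ x * q x ∂μ ≤ LbΨ * s := by
    refine (st11_cs2 hLΨ0 hq0 hLΨ_mem2 hq_mem2).trans ?_
    exact mul_le_mul_of_nonneg_right hsqΨ (Real.sqrt_nonneg _)
  have hPn : ‖Pv‖ ≤ Ldg * (Lbf * s) := by
    have hb : ∀ᵐ x ∂μ, ‖A x (gradient g (u x) - gradient g (v x))‖ ≤ Ldg * (ℓ x * q x) := by
      filter_upwards [hnA] with x hx
      calc ‖A x (gradient g (u x) - gradient g (v x))‖
          ≤ ℓ x * ‖gradient g (u x) - gradient g (v x)‖ :=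
            (ContinuousLinearMap.le_opNorm _ _).trans
              (mul_le_mul_of_nonneg_right hx (norm_nonneg _))
        _ ≤ ℓ x * (Ldg * q x) :=
            mul_le_mul_of_nonneg_left (st11_grad_lip hg2 hgH _ _) (hl0 x)
        _ = Ldg * (ℓ x * q x) := by ring
    calc ‖Pv‖ ≤ ∫ x, Ldg * (ℓ x * q x) ∂μ :=
          norm_integral_le_of_norm_le (hlq_int.const_mul Ldg) hb
      _ = Ldg * ∫ x, ℓ x * q x ∂μ := integral_const_mul Ldg _
      _ ≤ Ldg * (Lbf * s) := mul_le_mul_of_nonneg_left hcs_l hLdg.le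
  have hRn : ‖Rv‖ ≤ Lbf * s := by
    have hb : ∀ᵐ x ∂μ, ‖A x (u x - v x)‖ ≤ ℓ x * q x := by
      filter_upwards [hnA] with x hx
      exact (ContinuousLinearMap.le_opNorm _ _).trans
        (mul_le_mul_of_nonneg_right hx (norm_nonneg _))
    exact (norm_integral_le_of_norm_le hlq_int hb).trans hcs_l
  have hSn : ‖Sv‖ ≤ LbΨ * s := by
    have hb : ∀ᵐ x ∂μ, ‖B x (u x - v x)‖ ≤ LΨ x * q x :=
      Filter.Eventually.of_forall fun x =>
        (ContinuousLinearMap.le_opNorm _ _).trans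
          (mul_le_mul_of_nonneg_right (hΨB x θ) (norm_nonneg _))
    exact (norm_integral_le_of_norm_le hLΨq_int hb).trans hcs_Ψ
  have hTn : ‖Tv‖ ≤ Ldg * (LbΨ * s) := by
    have hb : ∀ᵐ x ∂μ, ‖B x ((fderiv ℝ (gradient g) (v x)) (u x - v x))‖
        ≤ Ldg * (LΨ x * q x) := by
      refine Filter.Eventually.of_forall fun x => ?_
      calc ‖B x ((fderiv ℝ (gradient g) (v x)) (u x - v x))‖
          ≤ LΨ x * ‖(fderiv ℝ (gradient g) (v x)) (u x - v x)‖ :=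
            (ContinuousLinearMap.le_opNorm _ _).trans
              (mul_le_mul_of_nonneg_right (hΨB x θ) (norm_nonneg _))
        _ ≤ LΨ x * (Ldg * q x) := by
            refine mul_le_mul_of_nonneg_left ?_ (hLΨ0 x)
            exact (ContinuousLinearMap.le_opNorm _ _).trans
              (mul_le_mul_of_nonneg_right (hgH _) (norm_nonneg _))
        _ = Ldg * (LΨ x * q x) := by ring
    calc ‖Tv‖ ≤ ∫ x, Ldg * (LΨ x * q x) ∂μ :=
          norm_integral_le_of_norm_le (hLΨq_int.const_mul Ldg) hb
      _ = Ldg * ∫ x, LΨ x * q x ∂μ := integral_const_mul Ldg _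
      _ ≤ Ldg * (LbΨ * s) := mul_le_mul_of_nonneg_left hcs_Ψ hLdg.le
  -- Łojasiewicz
  have hLoj' : s ^ 2 / 2 ≤ M * ‖Sv‖ ^ 2 := by
    have h := hLoj β θ
    rw [hQs] at h
    exact h
  -- scalar bounds
  have hG0 : (0:ℝ) ≤ ‖Gv‖ := norm_nonneg _
  have hP0 : (0:ℝ) ≤ ‖Pv‖ := norm_nonneg _
  have hR0 : (0:ℝ) ≤ ‖Rv‖ := norm_nonneg _
  have hS0 : (0:ℝ) ≤ ‖Sv‖ := norm_nonneg _
  have hT0 : (0:ℝ) ≤ ‖Tv‖ := norm_nonneg _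
  have b1 : ‖Pv‖ ^ 2 ≤ lam * (Ldg * (Lbf ^ 2 * s ^ 2)) := by
    have hc : (0:ℝ) ≤ Ldg * (Lbf ^ 2 * s ^ 2) := by positivity
    nlinarith only [hPn, hP0, hlam1, hc]
  have b2 : lam * ⟪Rv, Pv⟫ ≤ lam * (Ldg * (Lbf ^ 2 * s ^ 2)) := by
    have h := real_inner_le_norm Rv Pv
    have h2 : ⟪Rv, Pv⟫ ≤ (Lbf * s) * (Ldg * (Lbf * s)) :=
      h.trans (mul_le_mul hRn hPn hP0 (by positivity))
    nlinarith only [h2, hlam0.le]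
  have b3 : -(lam * ⟪Rv, Gv⟫) ≤ ε / 2 * ‖Gv‖ ^ 2 + lam ^ 2 * Lbf ^ 2 * s ^ 2 / (2 * ε) := by
    have h : -⟪Rv, Gv⟫ ≤ ‖Rv‖ * ‖Gv‖ := by
      have := abs_real_inner_le_norm Rv Gv
      cases' abs_le.mp this with h1 h2
      linarith
    have hRG : ‖Rv‖ * ‖Gv‖ ≤ (Lbf * s) * ‖Gv‖ := mul_le_mul_of_nonneg_right hRn hG0
    have h4 : -⟪Rv, Gv⟫ ≤ (Lbf * s) * ‖Gv‖ := h.trans hRG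
    have h2 : -(lam * ⟪Rv, Gv⟫) ≤ lam * (Lbf * s) * ‖Gv‖ := by
      nlinarith only [h4, hlam0.le]
    refine h2.trans ?_
    have key : ε / 2 * ‖Gv‖ ^ 2 + lam ^ 2 * Lbf ^ 2 * s ^ 2 / (2 * ε)
        - lam * (Lbf * s) * ‖Gv‖
        = (ε * ‖Gv‖ - lam * (Lbf * s)) ^ 2 / (2 * ε) := by
      field_simp
      ring
    have pos : (0:ℝ) ≤ (ε * ‖Gv‖ - lam * (Lbf * s)) ^ 2 / (2 * ε) := by positivity
    linarith only [key, pos]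
  have b4 : -(γ * ⟪Tv, Sv⟫) ≤ γ * (Ldg * (LbΨ ^ 2 * s ^ 2)) := by
    have h : -⟪Tv, Sv⟫ ≤ ‖Tv‖ * ‖Sv‖ := by
      have := abs_real_inner_le_norm Tv Sv
      cases' abs_le.mp this with h1 h2
      linarith
    have h2 : ‖Tv‖ * ‖Sv‖ ≤ (Ldg * (LbΨ * s)) * (LbΨ * s) :=
      mul_le_mul hTn hSn hS0 (by positivity)
    have h3 : -⟪Tv, Sv⟫ ≤ (Ldg * (LbΨ * s)) * (LbΨ * s) := h.trans h2
    nlinarith only [h3, hγ.le]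
  have b5 : -(γ * (lam * ‖Sv‖ ^ 2)) ≤ -(γ * lam * (s ^ 2 / 2) / M) := by
    have h : s ^ 2 / 2 / M ≤ ‖Sv‖ ^ 2 := by
      rw [div_le_iff₀ hM]
      linarith [hLoj']
    have hgl : (0:ℝ) ≤ γ * lam := mul_nonneg hγ.le hlam0.le
    have h2 := mul_le_mul_of_nonneg_left h hgl
    have e1 : γ * lam * (s ^ 2 / 2 / M) = γ * lam * (s ^ 2 / 2) / M := by ring
    have e2 : γ * (lam * ‖Sv‖ ^ 2) = γ * lam * ‖Sv‖ ^ 2 := by ring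
    linarith only [h2, e1, e2]
  -- combine
  have hiden : lam * (Ldg * (Lbf ^ 2 * s ^ 2)) + lam * (Ldg * (Lbf ^ 2 * s ^ 2))
      + (ε / 2 * ‖Gv‖ ^ 2 + lam ^ 2 * Lbf ^ 2 * s ^ 2 / (2 * ε))
      + γ * (Ldg * (LbΨ ^ 2 * s ^ 2)) - γ * lam * (s ^ 2 / 2) / M - ‖Gv‖ ^ 2
      = -(c₁ * (s ^ 2 / 2)) - c₂ * ‖Gv‖ ^ 2 := by
    subst hc₁ hc₂ hC
    field_simp
    ring
  rw [hexp, hQs]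
  linarith only [b1, b2, b3, b4, b5, hiden]
end
end

section
/- Under the Setup and Assumptions (A1), (A2), for all u, v ∈ ℝ^{n_β}: ‖ ∫ [ ∇_β F(x,u) ∇g(F(x,u)) − ∇_β F(x,v) ∇g(F(x,v)) ] μ(dx) ‖ ≤ ( L̄_f² L_{∇g} + L_g L̄_{∇f} ) ‖u − v‖. -/
open MeasureTheory ProbabilityTheory RealInnerProductSpace

noncomputable section

lemma norm_tJac {n m : ℕ} (φ : E n → E m) (x : E n) : ‖tJac φ x‖ = ‖fderiv ℝ φ x‖ :=
  ContinuousLinearMap.adjoint.norm_map _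

lemma sq_integral_le {α} [MeasurableSpace α] (ν : Measure α) [IsProbabilityMeasure ν] {h : α → ℝ}
    (hh : MemLp h 2 ν) : (∫ a, h a ∂ν) ^ 2 ≤ ∫ a, h a ^ 2 ∂ν := by
  have h1 := variance_nonneg h ν
  rw [variance_eq_sub hh] at h1
  simp only [Pi.pow_apply] at h1
  linarith

lemma aesm_section {α β δ : Type*} [MeasurableSpace α] [MeasurableSpace β] [TopologicalSpace δ]
    {μ : Measure α} [SFinite μ] {κ : Kernel α β} [IsSFiniteKernel κ]
    {f : α × β → δ} (hf : AEStronglyMeasurable f (μ ⊗ₘ κ)) :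
    ∀ᵐ x ∂μ, AEStronglyMeasurable (fun y => f (x, y)) (κ x) := by
  filter_upwards [Measure.ae_ae_of_ae_compProd hf.ae_eq_mk] with x hx using
    ⟨fun y => hf.mk f (x, y), hf.stronglyMeasurable_mk.comp_measurable measurable_prodMk_left, hx⟩

lemma lip_of_bound {G H : Type*} [NormedAddCommGroup G] [NormedSpace ℝ G]
    [NormedAddCommGroup H] [NormedSpace ℝ H] {φ : G → H} (hφ : Differentiable ℝ φ) {C : ℝ}
    (h : ∀ x, ‖fderiv ℝ φ x‖ ≤ C) (u v : G) : ‖φ u - φ v‖ ≤ C * ‖u - v‖ :=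
  Convex.norm_image_sub_le_of_norm_fderiv_le (fun x _ => hφ x) (fun x _ => h x)
    convex_univ trivial trivial

lemma grad_diff {n : ℕ} {g : E n → ℝ} (hg : ContDiff ℝ 2 g) : Differentiable ℝ (gradient g) := by
  have h1 : ContDiff ℝ 1 (fderiv ℝ g) := hg.fderiv_right (by norm_num)
  have h2 : gradient g = fun x => (InnerProductSpace.toDual ℝ (E n)).symm (fderiv ℝ g x) := rfl
  rw [h2]
  exact (InnerProductSpace.toDual ℝ (E n)).symm.toContinuousLinearEquiv.differentiable.comp
    (h1.differentiable one_ne_zero)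

set_option maxHeartbeats 2000000 in
/-- first estimate in the Appendix proof of Lemma 4.4 of the paper:
Lipschitz continuity of `∇G`, under (A1) and (A2). -/
theorem statement12 {nX nY nb nf : ℕ}
    (μ : Measure (E nX)) [IsProbabilityMeasure μ]
    (κ : Kernel (E nX) (E nY)) [IsMarkovKernel κ]
    (f : E nX → E nY → E nb → E nf)
    (hfm : Measurable (fun q : (E nX × E nY) × E nb => f q.1.1 q.1.2 q.2))
    (hfd : ∀ x y, Differentiable ℝ (f x y))
    (hDfm : ∀ β : E nb,
      AEStronglyMeasurable (fun z : E nX × E nY => tJac (f z.1 z.2) β) (μ ⊗ₘ κ))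
    -- Assumption (A1)
    (g : E nf → ℝ) (Lg Ldg : ℝ) (hLg : 0 < Lg) (hLdg : 0 < Ldg)
    (hgconv : ConvexOn ℝ Set.univ g) (hg2 : ContDiff ℝ 2 g)
    (hgB : ∀ u : E nf, ‖gradient g u‖ ≤ Lg)
    (hgH : ∀ u : E nf, ‖fderiv ℝ (gradient g) u‖ ≤ Ldg)
    -- Assumption (A2)
    (Lf Ldf : E nX × E nY → ℝ) (Lbf Lbdf Cf : ℝ)
    (hLfm : Measurable Lf) (hLdfm : Measurable Ldf)
    (hLf0 : ∀ z, 0 ≤ Lf z) (hLdf0 : ∀ z, 0 ≤ Ldf z)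
    (hLbf : 0 < Lbf) (hLbdf : 0 < Lbdf) (hCf : 0 < Cf)
    (hfB : ∀ x y (β : E nb), ‖tJac (f x y) β‖ ≤ Lf (x, y))
    (hfLip : ∀ x y (β β' : E nb),
      ‖tJac (f x y) β - tJac (f x y) β'‖ ≤ Ldf (x, y) * ‖β - β'‖)
    (hMomf : ∀ p ∈ ({2, 4} : Set ℕ),
      (Integrable (fun z => Lf z ^ p) (μ ⊗ₘ κ) ∧ ∫ z, Lf z ^ p ∂(μ ⊗ₘ κ) ≤ Lbf ^ p) ∧
      (∀ β : E nb, Integrable (fun z : E nX × E nY => ‖f z.1 z.2 β‖ ^ p) (μ ⊗ₘ κ) ∧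
          ∫ z : E nX × E nY, ‖f z.1 z.2 β‖ ^ p ∂(μ ⊗ₘ κ) ≤ Cf ^ p) ∧
      (Integrable (fun z => Ldf z ^ p) (μ ⊗ₘ κ) ∧ ∫ z, Ldf z ^ p ∂(μ ⊗ₘ κ) ≤ Lbdf ^ p))

    : ∀ u v : E nb,
      ‖∫ x, (DF κ f x u (gradient g (condF κ f x u))
          - DF κ f x v (gradient g (condF κ f x v))) ∂μ‖ ≤
        (Lbf ^ 2 * Ldg + Lg * Lbdf) * ‖u - v‖ := by
  intro u v
  obtain ⟨⟨hLf2i, hLf2b⟩, hfmom, ⟨hLdf2i, hLdf2b⟩⟩ := hMomf 2 (by simp)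
  set c : ℝ := ‖u - v‖ with hc
  have hc0 : 0 ≤ c := norm_nonneg _
  -- Lipschitz of the gradient of g
  have hgradLip : ∀ a b : E nf, ‖gradient g a - gradient g b‖ ≤ Ldg * ‖a - b‖ :=
    lip_of_bound (grad_diff hg2) hgH
  -- pointwise Lipschitz of f in β
  have hfLipPt : ∀ x y (β β' : E nb), ‖f x y β - f x y β'‖ ≤ Lf (x, y) * ‖β - β'‖ := by
    intro x y β β'
    exact lip_of_bound (hfd x y) (fun b => by rw [← norm_tJac]; exact hfB x y b) β β'
  -- shorthand
  set S : E nX → ℝ := fun x => ∫ y, Lf (x, y) ∂(κ x) with hS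
  set Q : E nX → ℝ := fun x => ∫ y, Lf (x, y) ^ 2 ∂(κ x) with hQ
  set T : E nX → ℝ := fun x => ∫ y, Ldf (x, y) ∂(κ x) with hT
  -- measurability of sections
  have hLfsec : ∀ x, Measurable fun y => Lf (x, y) := fun x => hLfm.comp measurable_prodMk_left
  have hLdfsec : ∀ x, Measurable fun y => Ldf (x, y) := fun x =>
    hLdfm.comp measurable_prodMk_left
  have hfsec : ∀ x (β : E nb), Measurable fun y => f x y β := fun x β =>
    hfm.comp (measurable_prodMk_left.prodMk measurable_const)
  -- integrability of Ldf over the product measure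
  have hLdfmemp : MemLp Ldf 2 (μ ⊗ₘ κ) :=
    (memLp_two_iff_integrable_sq hLdfm.aestronglyMeasurable).2 hLdf2i
  have hLdfint : Integrable Ldf (μ ⊗ₘ κ) := hLdfmemp.integrable one_le_two
  -- a.e. section facts
  have hA : ∀ᵐ x ∂μ, Integrable (fun y => Lf (x, y) ^ 2) (κ x) :=
    ((Measure.integrable_compProd_iff
      ((hLfm.pow_const 2).aestronglyMeasurable)).1 hLf2i).1
  have hB : ∀ᵐ x ∂μ, Integrable (fun y => Ldf (x, y)) (κ x) :=
    ((Measure.integrable_compProd_iff hLdfm.aestronglyMeasurable).1 hLdfint).1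
  have hCu : ∀ᵐ x ∂μ, Integrable (fun y => ‖f x y u‖ ^ 2) (κ x) :=
    ((Measure.integrable_compProd_iff
      (((hfm.comp (measurable_id.prodMk measurable_const)).norm.pow_const
        2).aestronglyMeasurable)).1 (hfmom u).1).1
  have hCv : ∀ᵐ x ∂μ, Integrable (fun y => ‖f x y v‖ ^ 2) (κ x) :=
    ((Measure.integrable_compProd_iff
      (((hfm.comp (measurable_id.prodMk measurable_const)).norm.pow_const
        2).aestronglyMeasurable)).1 (hfmom v).1).1
  have hEu : ∀ᵐ x ∂μ, AEStronglyMeasurable (fun y => tJac (f x y) u) (κ x) := aesm_section (hDfm u)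
  have hEv : ∀ᵐ x ∂μ, AEStronglyMeasurable (fun y => tJac (f x y) v) (κ x) := aesm_section (hDfm v)
  -- the main pointwise estimate
  have hpt : ∀ᵐ x ∂μ,
      ‖DF κ f x u (gradient g (condF κ f x u)) - DF κ f x v (gradient g (condF κ f x v))‖ ≤
        (Ldg * Q x + Lg * T x) * c := by
    filter_upwards [hA, hB, hCu, hCv, hEu, hEv] with x hA hB hCu hCv hEu hEv
    have hLfx : Integrable (fun y => Lf (x, y)) (κ x) :=
      ((memLp_two_iff_integrable_sq (hLfsec x).aestronglyMeasurable).2 hA).integrable one_le_two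
    have hfux : Integrable (fun y => f x y u) (κ x) :=
      ((memLp_two_iff_integrable_sq_norm (hfsec x u).aestronglyMeasurable).2
        hCu).integrable one_le_two
    have hfvx : Integrable (fun y => f x y v) (κ x) :=
      ((memLp_two_iff_integrable_sq_norm (hfsec x v).aestronglyMeasurable).2
        hCv).integrable one_le_two
    have htJu : Integrable (fun y => tJac (f x y) u) (κ x) :=
      hLfx.mono' hEu (Filter.Eventually.of_forall fun y => hfB x y u)
    have htJv : Integrable (fun y => tJac (f x y) v) (κ x) :=
      hLfx.mono' hEv (Filter.Eventually.of_forall fun y => hfB x y v)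
    have hS0 : 0 ≤ S x := integral_nonneg fun y => hLf0 (x, y)
    have hT0 : 0 ≤ T x := integral_nonneg fun y => hLdf0 (x, y)
    have hjensen : S x ^ 2 ≤ Q x :=
      sq_integral_le (κ x) ((memLp_two_iff_integrable_sq (hLfsec x).aestronglyMeasurable).2 hA)
    -- bound on ‖DF x u‖
    have b1 : ‖DF κ f x u‖ ≤ S x := by
      refine (norm_integral_le_integral_norm _).trans ?_
      exact integral_mono_of_nonneg (Filter.Eventually.of_forall fun y => norm_nonneg _) hLfx
        (Filter.Eventually.of_forall fun y => hfB x y u)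
    -- bound on ‖DF x u - DF x v‖
    have b2 : ‖DF κ f x u - DF κ f x v‖ ≤ T x * c := by
      have hsub : DF κ f x u - DF κ f x v =
          ∫ y, (tJac (f x y) u - tJac (f x y) v) ∂(κ x) := (integral_sub htJu htJv).symm
      rw [hsub]
      refine (norm_integral_le_integral_norm _).trans ?_
      have := integral_mono_of_nonneg (μ := κ x)
        (Filter.Eventually.of_forall fun y => norm_nonneg (tJac (f x y) u - tJac (f x y) v))
        (hB.mul_const c)
        (Filter.Eventually.of_forall fun y => hfLip x y u v)
      rw [integral_mul_const] at this
      exact this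
    -- bound on ‖condF x u - condF x v‖
    have b3 : ‖condF κ f x u - condF κ f x v‖ ≤ S x * c := by
      have hsub : condF κ f x u - condF κ f x v =
          ∫ y, (f x y u - f x y v) ∂(κ x) := (integral_sub hfux hfvx).symm
      rw [hsub]
      refine (norm_integral_le_integral_norm _).trans ?_
      have := integral_mono_of_nonneg (μ := κ x)
        (Filter.Eventually.of_forall fun y => norm_nonneg (f x y u - f x y v))
        (hLfx.mul_const c)
        (Filter.Eventually.of_forall fun y => hfLipPt x y u v)
      rw [integral_mul_const] at this
      exact this
    -- assemble
    set Gu := gradient g (condF κ f x u) with hGu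
    set Gv := gradient g (condF κ f x v) with hGv
    have e1 : ‖DF κ f x u Gu - DF κ f x u Gv‖ ≤ S x * (Ldg * (S x * c)) := by
      rw [← map_sub]
      refine (ContinuousLinearMap.le_opNorm _ _).trans ?_
      refine mul_le_mul b1 ?_ (norm_nonneg _) hS0
      exact (hgradLip _ _).trans (mul_le_mul_of_nonneg_left b3 hLdg.le)
    have e2 : ‖DF κ f x u Gv - DF κ f x v Gv‖ ≤ T x * c * Lg := by
      have : DF κ f x u Gv - DF κ f x v Gv = (DF κ f x u - DF κ f x v) Gv := by
        simp [ContinuousLinearMap.sub_apply]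
      rw [this]
      refine (ContinuousLinearMap.le_opNorm _ _).trans ?_
      exact mul_le_mul b2 (hgB _) (norm_nonneg _) (by positivity)
    calc ‖DF κ f x u Gu - DF κ f x v Gv‖
        = ‖(DF κ f x u Gu - DF κ f x u Gv) + (DF κ f x u Gv - DF κ f x v Gv)‖ := by abel_nf
      _ ≤ ‖DF κ f x u Gu - DF κ f x u Gv‖ + ‖DF κ f x u Gv - DF κ f x v Gv‖ := norm_add_le _ _
      _ ≤ S x * (Ldg * (S x * c)) + T x * c * Lg := add_le_add e1 e2
      _ ≤ (Ldg * Q x + Lg * T x) * c := by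
          nlinarith [mul_le_mul_of_nonneg_right hjensen (mul_nonneg hLdg.le hc0)]
  -- integrability of the dominating function
  have hQint : Integrable Q μ := by
    have h1 := ((Measure.integrable_compProd_iff
      ((hLfm.pow_const 2).aestronglyMeasurable)).1 hLf2i).2
    refine h1.congr (Filter.Eventually.of_forall fun x => ?_)
    exact integral_congr_ae (Filter.Eventually.of_forall fun y => by
      simp only [Real.norm_eq_abs]; exact abs_of_nonneg (by positivity))
  have hTint : Integrable T μ := by
    have h1 := ((Measure.integrable_compProd_iff hLdfm.aestronglyMeasurable).1 hLdfint).2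
    refine h1.congr (Filter.Eventually.of_forall fun x => ?_)
    exact integral_congr_ae (Filter.Eventually.of_forall fun y => by
      simp only [Real.norm_eq_abs]; exact abs_of_nonneg (hLdf0 _))
  -- integral identities
  have hQeq : ∫ x, Q x ∂μ = ∫ z, Lf z ^ 2 ∂(μ ⊗ₘ κ) := (Measure.integral_compProd hLf2i).symm
  have hTeq : ∫ x, T x ∂μ = ∫ z, Ldf z ∂(μ ⊗ₘ κ) := (Measure.integral_compProd hLdfint).symm
  have hQb : ∫ x, Q x ∂μ ≤ Lbf ^ 2 := hQeq ▸ hLf2b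
  have hTb : ∫ x, T x ∂μ ≤ Lbdf := by
    rw [hTeq]
    have h1 : (∫ z, Ldf z ∂(μ ⊗ₘ κ)) ^ 2 ≤ ∫ z, Ldf z ^ 2 ∂(μ ⊗ₘ κ) :=
      sq_integral_le _ hLdfmemp
    have h2 : 0 ≤ ∫ z, Ldf z ∂(μ ⊗ₘ κ) := integral_nonneg hLdf0
    nlinarith [hLdf2b]
  have hQ0 : 0 ≤ ∫ x, Q x ∂μ := integral_nonneg fun x => integral_nonneg fun y => by positivity
  have hT0 : 0 ≤ ∫ x, T x ∂μ := integral_nonneg fun x => integral_nonneg fun y => hLdf0 (x, y)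
  calc ‖∫ x, (DF κ f x u (gradient g (condF κ f x u))
          - DF κ f x v (gradient g (condF κ f x v))) ∂μ‖
      ≤ ∫ x, ‖DF κ f x u (gradient g (condF κ f x u))
          - DF κ f x v (gradient g (condF κ f x v))‖ ∂μ := norm_integral_le_integral_norm _
    _ ≤ ∫ x, (Ldg * Q x + Lg * T x) * c ∂μ :=
        integral_mono_of_nonneg (Filter.Eventually.of_forall fun x => norm_nonneg _)
          (((hQint.const_mul Ldg).add (hTint.const_mul Lg)).mul_const c) hpt
    _ = (Ldg * ∫ x, Q x ∂μ + Lg * ∫ x, T x ∂μ) * c := by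
        rw [integral_mul_const, integral_add (hQint.const_mul Ldg) (hTint.const_mul Lg),
          integral_const_mul, integral_const_mul]
    _ ≤ (Lbf ^ 2 * Ldg + Lg * Lbdf) * c := by
        apply mul_le_mul_of_nonneg_right _ hc0
        nlinarith [hQb, hTb]
end
end

section
/- Let N be a positive integer, α > 0, L > 0, K ≥ 0, and G_min ∈ ℝ. Let w_0, w_1, …, w_N and v_0, v_1, …, v_{N−1} be real numbers such that v_k ≥ 0 for all k, w_N ≥ G_min, and for every k ∈ {0, …, N−1}: w_{k+1} ≤ w_k − τ_k v_k + (L/2) τ_k² K, where τ_k = α/√(k+1). Then Σ_{k=0}^{N−1} τ_k v_k ≤ (L/2) K α² (1 + ln N) + w_0 − G_min, and consequently ( Σ_{k=0}^{N−1} τ_k v_k ) / ( Σ_{k=0}^{N−1} τ_k ) ≤ ( (L/2) K α² (1 + ln N) + w_0 − G_min ) / ( 2 α ( √(N+1) − 1 ) ). -/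
lemma harm_le (N : ℕ) (hN : 0 < N) :
    ∑ k ∈ Finset.range N, (1 : ℝ) / ((k : ℝ) + 1) ≤ 1 + Real.log N := by
  induction N with
  | zero => omega
  | succ n ih =>
    rcases Nat.eq_zero_or_pos n with h0 | hpos
    · subst h0; simp
    · rw [Finset.sum_range_succ]
      have hn : (0 : ℝ) < n := by exact_mod_cast hpos
      have key : (1 : ℝ) / ((n : ℝ) + 1) ≤ Real.log (n + 1) - Real.log n := by
        have h := Real.log_le_sub_one_of_pos (x := (n : ℝ) / (n + 1))
          (by positivity)
        rw [Real.log_div (by positivity) (by positivity)] at h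
        have : (n : ℝ) / (n + 1) - 1 = -(1 / (n + 1)) := by field_simp; ring
        linarith [h, this ▸ h]
      have := ih hpos
      push_cast
      linarith

lemma invsqrt_ge (N : ℕ) :
    2 * (Real.sqrt ((N : ℝ) + 1) - 1) ≤
      ∑ k ∈ Finset.range N, (1 : ℝ) / Real.sqrt ((k : ℝ) + 1) := by
  induction N with
  | zero => simp
  | succ n ih =>
    rw [Finset.sum_range_succ]
    have h1 : (0:ℝ) < Real.sqrt ((n:ℝ)+1) := Real.sqrt_pos.2 (by positivity)
    have h2 : (0:ℝ) < Real.sqrt ((n:ℝ)+2) := Real.sqrt_pos.2 (by positivity)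
    have key : 2 * (Real.sqrt ((n:ℝ)+2) - Real.sqrt ((n:ℝ)+1)) ≤ 1 / Real.sqrt ((n:ℝ)+1) := by
      have hd : Real.sqrt ((n:ℝ)+2) - Real.sqrt ((n:ℝ)+1)
          = 1 / (Real.sqrt ((n:ℝ)+2) + Real.sqrt ((n:ℝ)+1)) := by
        have e1 : Real.sqrt ((n:ℝ)+2) ^ 2 = (n:ℝ)+2 := Real.sq_sqrt (by positivity)
        have e2 : Real.sqrt ((n:ℝ)+1) ^ 2 = (n:ℝ)+1 := Real.sq_sqrt (by positivity)
        field_simp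
        nlinarith [e1, e2]
      rw [hd]
      have hle : Real.sqrt ((n:ℝ)+1) ≤ Real.sqrt ((n:ℝ)+2) :=
        Real.sqrt_le_sqrt (by linarith)
      rw [mul_one_div, div_le_div_iff₀ (by positivity) h1]
      nlinarith
    push_cast
    push_cast at ih
    have : ((n:ℝ) + 1 + 1) = (n:ℝ) + 2 := by ring
    rw [this]
    linarith

/-- remark after Theorem 4.6 of the paper: `O(ln N / √N)` rate with
the decreasing stepsizes `τ_k = α/√(k+1)`. -/
theorem statement17 (N : ℕ) (hN : 0 < N) (α L K Gmin : ℝ)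
    (hα : 0 < α) (hL : 0 < L) (hK : 0 ≤ K)
    (τ : ℕ → ℝ) (hτ : ∀ k, τ k = α / Real.sqrt ((k : ℝ) + 1))
    (w v : ℕ → ℝ) (hv : ∀ k < N, 0 ≤ v k) (hwN : Gmin ≤ w N)
    (hrec : ∀ k < N, w (k + 1) ≤ w k - τ k * v k + (L / 2) * τ k ^ 2 * K) :
    (∑ k ∈ Finset.range N, τ k * v k ≤
      (L / 2) * K * α ^ 2 * (1 + Real.log (N : ℝ)) + w 0 - Gmin) ∧
    (∑ k ∈ Finset.range N, τ k * v k) / (∑ k ∈ Finset.range N, τ k) ≤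
      ((L / 2) * K * α ^ 2 * (1 + Real.log (N : ℝ)) + w 0 - Gmin) /
        (2 * α * (Real.sqrt ((N : ℝ) + 1) - 1)) := by
  have hsq : ∀ k : ℕ, (0:ℝ) < Real.sqrt ((k:ℝ)+1) :=
    fun k => Real.sqrt_pos.2 (by positivity)
  -- τ is positive
  have hτpos : ∀ k, 0 < τ k := fun k => by rw [hτ k]; positivity
  -- τ k ^ 2 = α^2 / (k+1)
  have hτsq : ∀ k : ℕ, τ k ^ 2 = α ^ 2 * (1 / ((k:ℝ)+1)) := fun k => by
    rw [hτ k, div_pow, Real.sq_sqrt (by positivity : (0:ℝ) ≤ (k:ℝ)+1)]; ring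
  -- telescoping
  have tel : ∀ n ≤ N, ∑ k ∈ Finset.range n, τ k * v k ≤
      w 0 - w n + (L / 2) * K * ∑ k ∈ Finset.range n, τ k ^ 2 := by
    intro n hn
    induction n with
    | zero => simp
    | succ m ih =>
      have hm : m < N := hn
      have := ih (le_of_lt hm)
      have hr := hrec m hm
      rw [Finset.sum_range_succ, Finset.sum_range_succ]
      nlinarith [hr, this]
  have tel' := tel N le_rfl
  -- bound the sum of τ^2
  have hsum2 : ∑ k ∈ Finset.range N, τ k ^ 2 ≤ α ^ 2 * (1 + Real.log N) := by
    have : ∑ k ∈ Finset.range N, τ k ^ 2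
        = α ^ 2 * ∑ k ∈ Finset.range N, (1:ℝ)/((k:ℝ)+1) := by
      rw [Finset.mul_sum]; exact Finset.sum_congr rfl fun k _ => hτsq k
    rw [this]
    have := harm_le N hN
    nlinarith
  have hLK : (0:ℝ) ≤ (L/2) * K := by nlinarith
  have first : ∑ k ∈ Finset.range N, τ k * v k ≤
      (L / 2) * K * α ^ 2 * (1 + Real.log (N : ℝ)) + w 0 - Gmin := by
    have h1 : (L/2) * K * ∑ k ∈ Finset.range N, τ k ^ 2
        ≤ (L/2) * K * (α ^ 2 * (1 + Real.log N)) :=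
      mul_le_mul_of_nonneg_left hsum2 hLK
    nlinarith [tel', h1, hwN]
  refine ⟨first, ?_⟩
  -- denominator bounds
  have hτsum : 2 * α * (Real.sqrt ((N:ℝ)+1) - 1) ≤ ∑ k ∈ Finset.range N, τ k := by
    have : ∑ k ∈ Finset.range N, τ k
        = α * ∑ k ∈ Finset.range N, (1:ℝ)/Real.sqrt ((k:ℝ)+1) := by
      rw [Finset.mul_sum]
      exact Finset.sum_congr rfl fun k _ => by rw [hτ k, mul_one_div]
    rw [this]
    have := invsqrt_ge N
    nlinarith
  have hgt1 : (1:ℝ) < Real.sqrt ((N:ℝ)+1) := by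
    have h2 : (2:ℝ) ≤ (N:ℝ)+1 := by
      have : (1:ℝ) ≤ (N:ℝ) := by exact_mod_cast hN
      linarith
    nlinarith [Real.sq_sqrt (by positivity : (0:ℝ) ≤ (N:ℝ)+1), hsq N]
  have hdpos : (0:ℝ) < 2 * α * (Real.sqrt ((N:ℝ)+1) - 1) := by nlinarith
  have hnum0 : 0 ≤ ∑ k ∈ Finset.range N, τ k * v k :=
    Finset.sum_nonneg fun k hk =>
      mul_nonneg (hτpos k).le (hv k (Finset.mem_range.1 hk))
  exact div_le_div₀ (le_trans hnum0 first) first hdpos hτsum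
end
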